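/- Let X be a set with |X| strictly greater than the cardinality of the continuum. Then for every finite subset F of the symmetric group S(X), the centralizer c_{S(X)}(F) is nontrivial, i.e., contains a permutation different from the identity. Consequently S(X) is not a Taĭmanov group. -/

import Mathlib

open Cardinal

theorem stmt9 (X : Type*) (hX : Cardinal.continuum < Cardinal.mk X) :
    ∀ F : Finset (Equiv.Perm X),
      ∃ π : Equiv.Perm X, π ≠ 1 ∧ π ∈ Subgroup.centralizer (F : Set (Equiv.Perm X)) := by
  classical
  intro F
  -- the free group on the elements of F, acting on X via the evaluation hom
  set W := FreeGroup {σ // σ ∈ F} with hW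
  have hWc : Countable W := by
    have : Function.Surjective (FreeGroup.mk : List ({σ // σ ∈ F} × Bool) → W) :=
      fun x => ⟨x.toWord, x.mk_toWord⟩
    exact this.countable
  set A : W →* Equiv.Perm X := FreeGroup.lift (fun s => (s : Equiv.Perm X)) with hA
  set Φ : X → Set (W × W) := fun x => {p | A p.1 x = A p.2 x} with hΦ
  -- key claim: two points with same Φ-value, in distinct orbits
  have key : ∃ x y : X, Φ x = Φ y ∧ ∀ w : W, A w x ≠ y := by
    by_contra h
    push_neg at h
    have hfib : ∀ v : Set (W × W), #(Φ ⁻¹' {v}) ≤ ℵ₀ := by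
      intro v
      rcases Set.eq_empty_or_nonempty (Φ ⁻¹' {v}) with he | ⟨x, hx⟩
      · simp [he]
      · have hsub : Φ ⁻¹' {v} ⊆ Set.range (fun w : W => A w x) := by
          intro y hy
          obtain ⟨w, hw⟩ := h x y (by rw [Set.mem_preimage, Set.mem_singleton_iff] at hx hy; rw [hx, hy])
          exact ⟨w, hw⟩
        calc #(Φ ⁻¹' {v}) ≤ #(Set.range fun w : W => A w x) := Cardinal.mk_le_mk_of_subset hsub
          _ ≤ #W := Cardinal.mk_range_le
          _ ≤ ℵ₀ := Cardinal.mk_le_aleph0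
    have h1 : #X ≤ #(Set (W × W)) * ℵ₀ := Cardinal.mk_le_mk_mul_of_mk_preimage_le Φ hfib
    have h2 : #(Set (W × W)) ≤ continuum := by
      rw [Cardinal.mk_set, ← Cardinal.two_power_aleph0]
      exact Cardinal.power_le_power_left two_ne_zero Cardinal.mk_le_aleph0
    have : #X ≤ continuum := by
      calc #X ≤ #(Set (W × W)) * ℵ₀ := h1
        _ ≤ continuum * ℵ₀ := mul_le_mul_left h2 _
        _ = continuum := by
          rw [Cardinal.mul_aleph0_eq (Cardinal.aleph0_le_continuum)]
    exact absurd hX (not_lt.mpr this)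
  obtain ⟨x, y, hΦxy, hxy⟩ := key
  -- Φ-equality transfer
  have htrans : ∀ w w' : W, A w x = A w' x ↔ A w y = A w' y := by
    intro w w'
    constructor
    · intro h; have : (w, w') ∈ Φ x := h; rw [hΦxy] at this; exact this
    · intro h; have : (w, w') ∈ Φ y := h; rw [← hΦxy] at this; exact this
  -- orbits are disjoint
  have hdisj : ∀ w w' : W, A w x ≠ A w' y := by
    intro w w' h
    exact hxy (w'⁻¹ * w) (by rw [map_mul, Equiv.Perm.mul_apply, h, ← Equiv.Perm.mul_apply, ← map_mul, inv_mul_cancel, map_one, Equiv.Perm.one_apply])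
  -- the swapping function
  set f : X → X := fun z =>
    if h : ∃ w : W, A w x = z then A h.choose y
    else if h' : ∃ w : W, A w y = z then A h'.choose x
    else z with hf
  have factA : ∀ w : W, f (A w x) = A w y := by
    intro w
    have h : ∃ w' : W, A w' x = A w x := ⟨w, rfl⟩
    simp only [hf, dif_pos h]
    exact (htrans _ _).mp h.choose_spec
  have factB : ∀ w : W, f (A w y) = A w x := by
    intro w
    have h : ¬∃ w' : W, A w' x = A w y := fun ⟨w', hw'⟩ => hdisj w' w hw'
    have h' : ∃ w' : W, A w' y = A w y := ⟨w, rfl⟩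
    simp only [hf, dif_neg h, dif_pos h']
    exact (htrans _ _).mpr h'.choose_spec
  have factC : ∀ z : X, (¬∃ w : W, A w x = z) → (¬∃ w : W, A w y = z) → f z = z := by
    intro z h h'
    simp only [hf, dif_neg h, dif_neg h']
  have hinv : Function.Involutive f := by
    intro z
    by_cases h : ∃ w : W, A w x = z
    · obtain ⟨w, hw⟩ := h
      rw [← hw, factA, factB]
    · by_cases h' : ∃ w : W, A w y = z
      · obtain ⟨w, hw⟩ := h'
        rw [← hw, factB, factA]
      · rw [factC z h h', factC z h h']
  set π : Equiv.Perm X := hinv.toPerm with hπ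
  have hπapp : ∀ z, π z = f z := fun z => rfl
  refine ⟨π, ?_, ?_⟩
  · intro hcon
    have h1 : π x = y := by
      rw [hπapp]
      have := factA 1
      simpa using this
    rw [hcon] at h1
    exact hxy 1 (by rw [map_one, Equiv.Perm.one_apply]; exact h1.symm ▸ rfl)
  · rw [Subgroup.mem_centralizer_iff]
    intro σ hσ
    have hσF : σ ∈ F := hσ
    set s : W := FreeGroup.of (⟨σ, hσF⟩ : {σ // σ ∈ F}) with hs
    have hAs : A s = σ := FreeGroup.lift_apply_of
    ext z
    -- (σ * π) z = (π * σ) z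
    show σ (π z) = π (σ z)
    rw [hπapp, hπapp]
    by_cases h : ∃ w : W, A w x = z
    · obtain ⟨w, hw⟩ := h
      have h1 : σ (A w x) = A (s * w) x := by rw [map_mul, hAs, Equiv.Perm.mul_apply]
      rw [← hw, factA, h1, factA, map_mul, hAs, Equiv.Perm.mul_apply]
    · by_cases h' : ∃ w : W, A w y = z
      · obtain ⟨w, hw⟩ := h'
        have h1 : σ (A w y) = A (s * w) y := by rw [map_mul, hAs, Equiv.Perm.mul_apply]
        rw [← hw, factB, h1, factB, map_mul, hAs, Equiv.Perm.mul_apply]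
      · have hx' : ¬∃ w : W, A w x = σ z := by
          rintro ⟨w, hw⟩
          exact h ⟨s⁻¹ * w, by rw [map_mul, Equiv.Perm.mul_apply, hw, map_inv, hAs]; exact Equiv.symm_apply_apply σ z⟩
        have hy' : ¬∃ w : W, A w y = σ z := by
          rintro ⟨w, hw⟩
          exact h' ⟨s⁻¹ * w, by rw [map_mul, Equiv.Perm.mul_apply, hw, map_inv, hAs]; exact Equiv.symm_apply_apply σ z⟩
        rw [factC z h h', factC (σ z) hx' hy']
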